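/- Let H be a hierarchy on X and let A, B be distinct inclusion-maximal proper subsets of some D ∈ H that are members of H, with A ∪ B ≠ D. Then the collection obtained from H by deleting each of A and B that has more than one element and adding A ∪ B is again a hierarchy on X (the 'binding' of H at A ∪ B). -/

import Mathlib

open Finset

variable {X : Type*} [DecidableEq X] [Fintype X]

/-- A hierarchy on a finite set `X`: a collection of subsets of `X` containing `X`
and all singletons, whose members are nonempty and pairwise disjoint or nested. -/
def IsHierarchy (H : Finset (Finset X)) : Prop :=
  (Finset.univ ∈ H) ∧ (∀ x : X, {x} ∈ H) ∧ (∀ A ∈ H, A.Nonempty) ∧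
    ∀ A ∈ H, ∀ B ∈ H, A ∩ B = ∅ ∨ A ⊆ B ∨ B ⊆ A

/-- A hierarchy-preserving map from `H` to `H'`: fixes singletons, is enveloping and
subset-preserving. -/
def IsHPMap (H H' : Finset (Finset X)) (δ : Finset X → Finset X) : Prop :=
  (∀ A ∈ H, δ A ∈ H') ∧ (∀ x : X, δ {x} = {x}) ∧
    (∀ A ∈ H, A ⊆ δ A) ∧ ∀ A ∈ H, ∀ B ∈ H, A ⊂ B → δ A ⊂ δ B

/-- `T ≤_HP T'`: there exists a hierarchy-preserving map from `H(T)` to `H(T')`. -/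
def LeHP (H H' : Finset (Finset X)) : Prop :=
  ∃ δ : Finset X → Finset X, IsHPMap H H' δ

/-- `A` is an inclusion-maximal (proper) subcluster of `D` in `H`. -/
def IsMaxSub (H : Finset (Finset X)) (A D : Finset X) : Prop :=
  A ∈ H ∧ D ∈ H ∧ A ⊂ D ∧ ∀ C ∈ H, ¬(A ⊂ C ∧ C ⊂ D)

/-- The binding of `H` at `A ∪ B`: delete the non-singleton members of `{A, B}` and
add `A ∪ B`. -/
def binding (H : Finset (Finset X)) (A B : Finset X) : Finset (Finset X) :=
  (H.filter fun C => ¬((C = A ∨ C = B) ∧ 1 < C.card)) ∪ {A ∪ B}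

/-- the binding of a hierarchy at the union of two distinct inclusion-maximal
subclusters of a cluster `D` (with `A ∪ B ≠ D`) is again a hierarchy. -/
theorem binding_isHierarchy (H : Finset (Finset X)) (A B D : Finset X)
    (hH : IsHierarchy H) (hA : IsMaxSub H A D) (hB : IsMaxSub H B D)
    (hAB : A ≠ B) (hU : A ∪ B ≠ D) :
    IsHierarchy (binding H A B) := by
  obtain ⟨hu, hs, hne, hpw⟩ := hH
  obtain ⟨hAH, hDH, hAD, hAmax⟩ := hA
  obtain ⟨hBH, hDH', hBD, hBmax⟩ := hB
  have hmem : ∀ C : Finset X, C ∈ binding H A B ↔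
      (C ∈ H ∧ ¬((C = A ∨ C = B) ∧ 1 < C.card)) ∨ C = A ∪ B := by
    intro C
    simp [binding, Finset.mem_union, Finset.mem_filter, Finset.mem_singleton]
    exact or_comm
  -- key comparison lemma
  have key : ∀ C ∈ H, C ∩ (A ∪ B) = ∅ ∨ C ⊆ A ∪ B ∨ A ∪ B ⊆ C := by
    intro C hC
    rcases hpw C hC D hDH with h | h | h
    · left
      have : C ∩ (A ∪ B) ⊆ C ∩ D :=
        Finset.inter_subset_inter (Finset.Subset.refl C) (Finset.union_subset hAD.1 hBD.1)
      rw [h] at this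
      exact Finset.subset_empty.mp this
    · rcases hpw C hC A hAH with h1 | h1 | h1
      · rcases hpw C hC B hBH with h2 | h2 | h2
        · left
          rw [Finset.inter_union_distrib_left, h1, h2, Finset.union_empty]
        · right; left; exact h2.trans Finset.subset_union_right
        · by_cases hcb : C = B
          · right; left; rw [hcb]; exact Finset.subset_union_right
          · exfalso
            have hBC : B ⊂ C := ssubset_of_subset_of_ne h2 (Ne.symm hcb)
            have hcd : C = D := by
              by_contra hcd
              exact hBmax C hC ⟨hBC, ssubset_of_subset_of_ne h hcd⟩
            have : A ⊆ C := hcd ▸ hAD.1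
            obtain ⟨a, ha⟩ := hne A hAH
            have : a ∈ C ∩ A := Finset.mem_inter.mpr ⟨this ha, ha⟩
            rw [h1] at this
            exact Finset.notMem_empty a this
      · right; left; exact h1.trans Finset.subset_union_left
      · by_cases hca : C = A
        · right; left; rw [hca]; exact Finset.subset_union_left
        · have hAC : A ⊂ C := ssubset_of_subset_of_ne h1 (Ne.symm hca)
          have hcd : C = D := by
            by_contra hcd
            exact hAmax C hC ⟨hAC, ssubset_of_subset_of_ne h hcd⟩
          right; right
          exact Finset.union_subset h1 (hcd ▸ hBD.1)
    · right; right
      exact (Finset.union_subset hAD.1 hBD.1).trans h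
  refine ⟨?_, ?_, ?_, ?_⟩
  · rw [hmem]; left
    refine ⟨hu, ?_⟩
    rintro ⟨h1 | h1, -⟩
    · exact absurd (h1 ▸ hAD).2 (fun h => h (Finset.subset_univ D))
    · exact absurd (h1 ▸ hBD).2 (fun h => h (Finset.subset_univ D))
  · intro x
    rw [hmem]; left
    exact ⟨hs x, fun ⟨_, hc⟩ => by simp at hc⟩
  · intro C hC
    rw [hmem] at hC
    rcases hC with ⟨hC, -⟩ | rfl
    · exact hne C hC
    · exact (hne A hAH).mono Finset.subset_union_left
  · intro C hC E hE
    rw [hmem] at hC hE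
    rcases hC with ⟨hC, -⟩ | rfl
    · rcases hE with ⟨hE, -⟩ | rfl
      · exact hpw C hC E hE
      · exact key C hC
    · rcases hE with ⟨hE, -⟩ | rfl
      · rcases key E hE with h | h | h
        · left; rw [Finset.inter_comm] at h; exact h
        · right; right; exact h
        · right; left; exact h
      · right; left; exact Finset.Subset.refl _
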